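/- arXiv:2108.00415 — 4 statements merged into one kernel-verified Lean document; each statement's English description precedes it below -/
import Mathlib

section
/- Let f, g : Bool × Bool × Bool → Bool be local rules of elementary cellular automata and suppose f ≤ₖ g with witnessing encoding enc : Bool → Bool^k. Then for every l ≥ 3 and every Boolean sequence c of length l, applying enc entrywise to f̃(c) gives the same sequence as applying g̃^k to the entrywise encoding of c; that is, ē(f̃(c)) = g̃^k(ē(c)). -/
/-- The unravelling of a local rule `f`: it maps a sequence `(b₁,…,bₙ)` (for `n ≥ 3`) to
`(f(b₁,b₂,b₃), f(b₂,b₃,b₄), …, f(b_{n-2},b_{n-1},bₙ))` of length `n - 2`. -/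
def unravel {S : Type*} (f : S × S × S → S) : List S → List S
  | a :: b :: c :: rest => f (a, b, c) :: unravel f (b :: c :: rest)
  | _ => []

/-- Entrywise encoding `ē`: replace each entry by its block and concatenate. -/
def ebar {S T : Type*} (e : S → List T) (c : List S) : List T :=
  (c.map e).flatten

/-- `f ≤ₖ g`: the ECA rule `f` is emulated by `g` with supercell size `k`. -/
def Emulates (f g : Bool × Bool × Bool → Bool) (k : ℕ) : Prop :=
  ∃ enc : Bool → List Bool, Function.Injective enc ∧ (∀ b, (enc b).length = k) ∧
    ∀ s₁ s₂ s₃ : Bool,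
      enc (f (s₁, s₂, s₃)) = (unravel g)^[k] (enc s₁ ++ enc s₂ ++ enc s₃)

lemma unravel_take {S : Type*} (f : S × S × S → S) :
    ∀ (w : List S) (n : ℕ), (unravel f w).take n = unravel f (w.take (n+2))
  | [], n => by simp [unravel]
  | [a], n => by simp [unravel]
  | [a,b], n => by
      have : (n+2) = n+1+1 := rfl
      simp [this, unravel, List.take_succ_cons]
  | a::b::c::rest, 0 => by simp [unravel]
  | a::b::c::rest, (n+1) => by
      show (f (a,b,c) :: unravel f (b::c::rest)).take (n+1)
        = unravel f ((a::b::c::rest).take (n+1+2))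
      simp only [List.take_succ_cons, unravel]
      rw [unravel_take f (b::c::rest) n]
      rfl

lemma unravel_tail {S : Type*} (f : S × S × S → S) (w : List S) :
    (unravel f w).tail = unravel f w.tail := by
  match w with
  | [] => rfl
  | [a] => rfl
  | [a,b] => rfl
  | a::b::c::rest => rfl

lemma unravel_drop {S : Type*} (f : S × S × S → S) (w : List S) (n : ℕ) :
    (unravel f w).drop n = unravel f (w.drop n) := by
  induction n generalizing w with
  | zero => rfl
  | succ n ih =>
    rw [show n+1 = 1 + n by omega, ← List.drop_drop, ← List.drop_drop,
      List.drop_one, List.drop_one, unravel_tail, ih]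

lemma unravel_iter_take {S : Type*} (g : S × S × S → S) (k : ℕ) (w : List S) (n : ℕ) :
    ((unravel g)^[k] w).take n = (unravel g)^[k] (w.take (n + 2*k)) := by
  induction k generalizing w n with
  | zero => simp
  | succ k ih =>
    rw [Function.iterate_succ_apply, ih, unravel_take,
      Function.iterate_succ_apply]
    ring_nf

lemma unravel_iter_drop {S : Type*} (g : S × S × S → S) (k : ℕ) (w : List S) (n : ℕ) :
    ((unravel g)^[k] w).drop n = (unravel g)^[k] (w.drop n) := by
  induction k generalizing w with
  | zero => rfl
  | succ k ih => rw [Function.iterate_succ_apply, ih, unravel_drop, Function.iterate_succ_apply]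


/-- if `enc` witnesses `f ≤ₖ g`, then for every configuration `c` of length
`l ≥ 3` one has `ē(f̃(c)) = g̃^k(ē(c))`. -/
theorem stmt_0 (f g : Bool × Bool × Bool → Bool) (k : ℕ)
    (enc : Bool → List Bool)
    (henc_inj : Function.Injective enc)
    (henc_len : ∀ b, (enc b).length = k)
    (hwit : ∀ s₁ s₂ s₃ : Bool,
      enc (f (s₁, s₂, s₃)) = (unravel g)^[k] (enc s₁ ++ enc s₂ ++ enc s₃))
    (c : List Bool) (hc : 3 ≤ c.length) :
    ebar enc (unravel f c) = (unravel g)^[k] (ebar enc c) := by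
  induction c with
  | nil => simp at hc
  | cons a t ih =>
    rcases t with _ | ⟨b, t⟩
    · simp at hc
    rcases t with _ | ⟨c', t⟩
    · simp at hc
    rcases t with _ | ⟨d, t⟩
    · -- base case [a, b, c']
      show ebar enc [f (a,b,c')] = (unravel g)^[k] (ebar enc [a,b,c'])
      simp only [ebar, List.map_cons, List.map_nil, List.flatten_cons, List.flatten_nil,
        List.append_nil]
      rw [hwit, List.append_assoc]
    · -- inductive step
      have ih' := ih (by simp)
      have hE : ebar enc (a :: b :: c' :: d :: t)
          = enc a ++ ebar enc (b :: c' :: d :: t) := by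
        simp [ebar]
      have hL : ebar enc (unravel f (a :: b :: c' :: d :: t))
          = enc (f (a,b,c')) ++ ebar enc (unravel f (b :: c' :: d :: t)) := by
        show ebar enc (f (a,b,c') :: unravel f (b :: c' :: d :: t)) = _
        simp [ebar]
      rw [hL, ih']
      set w := ebar enc (a :: b :: c' :: d :: t) with hw
      have htake : w.take (k + 2*k) = enc a ++ enc b ++ enc c' := by
        have : w = enc a ++ (enc b ++ (enc c' ++ ebar enc (d :: t))) := by
          simp [hw, ebar]
        rw [this, show k + 2*k = (enc a).length + (k + k) by rw [henc_len]; ring,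
          List.take_length_add_append, show k + k = (enc b).length + k by rw [henc_len],
          List.take_length_add_append, show k = (enc c').length by rw [henc_len],
          List.take_left, List.append_assoc]
      have hdrop : w.drop k = ebar enc (b :: c' :: d :: t) := by
        rw [hE, show k = (enc a).length from (henc_len a).symm, List.drop_left]
      calc enc (f (a,b,c')) ++ (unravel g)^[k] (ebar enc (b :: c' :: d :: t))
          = ((unravel g)^[k] w).take k ++ ((unravel g)^[k] w).drop k := by
            rw [unravel_iter_take, unravel_iter_drop, htake, hdrop, hwit]
        _ = (unravel g)^[k] w := List.take_append_drop _ _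
end

section
/- ECA rule 184 can be emulated by ECA rule 148 with supercell size 2: rule 184 ≤₂ rule 148, i.e., there exists an injective encoding enc : Bool → Bool² such that enc(f₁₈₄(s₁,s₂,s₃)) = (f₁₄₈)~²(enc(s₁) ++ enc(s₂) ++ enc(s₃)) for all s₁, s₂, s₃ ∈ Bool. -/
/-- The ECA local rule with Wolfram number `n`. -/
def ecaRule (n : ℕ) : Bool × Bool × Bool → Bool :=
  fun t => n.testBit (4 * t.1.toNat + 2 * t.2.1.toNat + t.2.2.toNat)

/-- rule 184 can be emulated by rule 148 with supercell size 2. -/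
theorem stmt_11 : Emulates (ecaRule 184) (ecaRule 148) 2 := by
  refine ⟨fun b => [false, b], ?_, ?_, ?_⟩
  · intro a b h; simpa using h
  · intro b; rfl
  · decide
end

section
/- For each of the nonlinear ECA rules 18, 126 and 146, the linear rule 90 can be emulated by it non-trivially: for each g ∈ {rule 18, rule 126, rule 146} there exists a supercell size k with 2 ≤ k ≤ 11 such that rule 90 ≤ₖ g. -/
/-- the linear rule 90 can be emulated non-trivially by each of the nonlinear
rules 18, 126 and 146, with some supercell size `2 ≤ k ≤ 11`. -/
theorem stmt_14 :
    ∀ n ∈ ([18, 126, 146] : List ℕ),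
      ∃ k : ℕ, 2 ≤ k ∧ k ≤ 11 ∧ Emulates (ecaRule 90) (ecaRule n) k := by
  intro n hn
  refine ⟨2, by norm_num, by norm_num, ?_⟩
  fin_cases hn
  · exact ⟨fun b => if b then [false, true] else [false, false],
      by decide, by decide, by decide⟩
  · exact ⟨fun b => if b then [true, true] else [false, false],
      by decide, by decide, by decide⟩
  · exact ⟨fun b => if b then [false, true] else [false, false],
      by decide, by decide, by decide⟩
end

section
/- ECA rule 146 can be emulated by the chaotic-looking rule 22 non-trivially: there exists a supercell size k with 2 ≤ k ≤ 11 such that rule 146 ≤ₖ rule 22. -/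
/-- rule 146 can be emulated by rule 22 non-trivially, with some supercell size
`2 ≤ k ≤ 11`. -/
theorem stmt_15 :
    ∃ k : ℕ, 2 ≤ k ∧ k ≤ 11 ∧ Emulates (ecaRule 146) (ecaRule 22) k := by
  refine ⟨2, le_refl _, by norm_num, fun b => if b then [false, true] else [false, false],
    ?_, ?_, ?_⟩
  · intro a b h
    cases a <;> cases b <;> simp_all
  · intro b; cases b <;> rfl
  · decide
end
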